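/- A graph G admits an AND(1)-realization if and only if there exists a linear ordering < of its vertices satisfying the four point condition: for every four vertices x < u < v < y, if xv and uy are edges of G then uv is an edge of G. -/

import Mathlib

/-- An `AND(1)`-realization of `G`: each vertex `v` gets a closed interval
`[L v, R v]` and a representative point `p v` in it, with adjacency of distinct
vertices iff mutual containment of the representative points. -/
def IsAND1Real {V : Type*} (G : SimpleGraph V) (L R p : V → ℝ) : Prop :=
  (∀ v, L v ≤ p v ∧ p v ≤ R v) ∧
    ∀ u v : V, u ≠ v →
      (G.Adj u v ↔ L u ≤ p v ∧ p v ≤ R u ∧ L v ≤ p u ∧ p u ≤ R v)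

/-- A central (`c`-)`AND(1)`-realization: moreover each representative point is
the midpoint of its interval. -/
def IsCAND1Real {V : Type*} (G : SimpleGraph V) (L R p : V → ℝ) : Prop :=
  IsAND1Real G L R p ∧ ∀ v, p v = (L v + R v) / 2

/-- The class `AND(1)`. -/
def InAND1 {V : Type*} (G : SimpleGraph V) : Prop :=
  ∃ L R p : V → ℝ, IsAND1Real G L R p

/-- The class `c-AND(1)`. -/
def InCAND1 {V : Type*} (G : SimpleGraph V) : Prop :=
  ∃ L R p : V → ℝ, IsCAND1Real G L R p

/-- A linear ordering of the vertices (an injective map to `ℝ`) satisfying the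
four point condition: `x < u < v < y` with `xv, uy ∈ E` implies `uv ∈ E`. -/
def FourPointCond {V : Type*} (G : SimpleGraph V) (f : V → ℝ) : Prop :=
  Function.Injective f ∧
    ∀ x u v y : V, f x < f u → f u < f v → f v < f y →
      G.Adj x v → G.Adj u y → G.Adj u v

/-- A finite graph admits an `AND(1)`-realization iff some linear ordering of
its vertices satisfies the four point condition. -/
theorem and1_iff_fourPoint {V : Type*} [Fintype V] (G : SimpleGraph V) :
    InAND1 G ↔ ∃ f : V → ℝ, FourPointCond G f := by
  classical
  constructor
  · rintro ⟨L, R, p, hin, hadj⟩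
    -- minimal positive gap
    set D : Finset ℝ := ((Finset.univ ×ˢ (Finset.univ : Finset V)).image
        (fun ab => p ab.1 - p ab.2)).filter (fun x => 0 < x) with hD
    set δ : ℝ := if h : D.Nonempty then D.min' h else 1 with hδdef
    have hδpos : 0 < δ := by
      rw [hδdef]
      split_ifs with h
      · exact (Finset.mem_filter.mp (D.min'_mem h)).2
      · norm_num
    have hδle : ∀ a b : V, p a < p b → δ ≤ p b - p a := by
      intro a b hab
      have hmem : p b - p a ∈ D := by
        rw [hD]
        refine Finset.mem_filter.mpr ⟨?_, by simpa using sub_pos.mpr hab⟩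
        exact Finset.mem_image.mpr ⟨(b, a), by simp, rfl⟩
      rw [hδdef, dif_pos ⟨_, hmem⟩]
      exact D.min'_le _ hmem
    set n := Fintype.card V with hn
    set e := Fintype.equivFin V with he
    set g : V → ℝ := fun v => (e v : ℝ) * (δ / (2 * n)) with hg
    have hgbound : ∀ v : V, 0 ≤ g v ∧ g v < δ / 2 := by
      intro v
      have hn0 : 0 < (n : ℝ) := by
        have : 0 < n := Fintype.card_pos_iff.mpr ⟨v⟩
        exact_mod_cast this
      constructor
      · exact mul_nonneg (Nat.cast_nonneg _) (by positivity)
      · have h1 : ((e v : ℕ) : ℝ) < n := by exact_mod_cast (e v).isLt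
        calc ((e v : ℕ) : ℝ) * (δ / (2 * n)) < n * (δ / (2 * n)) :=
              mul_lt_mul_of_pos_right h1 (by positivity)
          _ = δ / 2 := by field_simp
    set f : V → ℝ := fun v => p v + g v with hf
    have hmono : ∀ a b : V, f a < f b → p a ≤ p b := by
      intro a b hab
      by_contra h
      push_neg at h
      have h1 := hδle b a h
      have h2 := (hgbound a).1
      have h3 := (hgbound b).2
      have : f b < f a := by simp only [hf]; linarith
      linarith
    have hinj : Function.Injective f := by
      intro a b hab
      have hn0 : 0 < (n : ℝ) := by
        have : 0 < n := Fintype.card_pos_iff.mpr ⟨a⟩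
        exact_mod_cast this
      have hpab : p a = p b := by
        rcases lt_trichotomy (p a) (p b) with h | h | h
        · have h1 := hδle a b h
          have h2 := (hgbound a).2
          have h3 := (hgbound b).1
          have : f a < f b := by simp only [hf]; linarith
          exact absurd hab (ne_of_lt this)
        · exact h
        · have h1 := hδle b a h
          have h2 := (hgbound b).2
          have h3 := (hgbound a).1
          have : f b < f a := by simp only [hf]; linarith
          exact absurd hab (ne_of_gt this)
      have hgab : g a = g b := by
        have : p a + g a = p b + g b := hab
        linarith
      have hc : (0:ℝ) < δ / (2 * n) := by positivity
      have : ((e a : ℕ) : ℝ) = ((e b : ℕ) : ℝ) :=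
        mul_right_cancel₀ (ne_of_gt hc) hgab
      have : (e a : ℕ) = (e b : ℕ) := by exact_mod_cast this
      exact e.injective (Fin.val_injective this)
    refine ⟨f, hinj, ?_⟩
    intro x u v y hxu huv hvy hxv huy
    have hpxu := hmono x u hxu
    have hpuv := hmono u v huv
    have hpvy := hmono v y hvy
    have hxv' : x ≠ v := fun h => absurd (congrArg f h) (ne_of_lt (hxu.trans huv))
    have huy' : u ≠ y := fun h => absurd (congrArg f h) (ne_of_lt (huv.trans hvy))
    have huv' : u ≠ v := fun h => absurd (congrArg f h) (ne_of_lt huv)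
    obtain ⟨b1, b2, b3, b4⟩ := (hadj x v hxv').mp hxv
    obtain ⟨c1, c2, c3, c4⟩ := (hadj u y huy').mp huy
    have hu := hin u
    have hv := hin v
    exact (hadj u v huv').mpr ⟨by linarith, by linarith, by linarith, by linarith⟩
  · rintro ⟨f, hinj, h4⟩
    set N : V → Finset V := fun v => insert v (Finset.univ.filter (fun w => G.Adj v w)) with hNdef
    have hNne : ∀ v, (N v).Nonempty := fun v => ⟨v, Finset.mem_insert_self _ _⟩
    have hNmem : ∀ v w, w ∈ N v ↔ w = v ∨ G.Adj v w := by
      intro v w; simp [hNdef]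
    set R : V → ℝ := fun v => (N v).sup' (hNne v) f with hR
    set L : V → ℝ := fun v => (N v).inf' (hNne v) f with hL
    have hself : ∀ v, L v ≤ f v ∧ f v ≤ R v := fun v =>
      ⟨Finset.inf'_le f (Finset.mem_insert_self _ _),
       Finset.le_sup' f (Finset.mem_insert_self _ _)⟩
    -- key lemma: ordered mutual containment implies adjacency
    have key : ∀ u v : V, f u < f v → f v ≤ R u → L v ≤ f u → G.Adj u v := by
      intro u v huv hRu hLv
      obtain ⟨y, hy, hey⟩ := Finset.exists_mem_eq_sup' (hNne u) f
      obtain ⟨x, hx, hex⟩ := Finset.exists_mem_eq_inf' (hNne v) f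
      have hRu' : f v ≤ f y := le_of_le_of_eq hRu hey
      have hLv' : f x ≤ f u := le_of_eq_of_le hex.symm hLv
      rcases (hNmem u y).mp hy with rfl | hyadj
      · exact absurd huv (not_lt.mpr hRu')
      rcases (hNmem v x).mp hx with rfl | hxadj
      · exact absurd huv (not_lt.mpr hLv')
      rcases eq_or_lt_of_le hRu' with h | h
      · rw [hinj h]; exact hyadj
      rcases eq_or_lt_of_le hLv' with h' | h'
      · rw [← hinj h']; exact hxadj.symm
      exact h4 x u v y h' huv h hxadj.symm hyadj
    refine ⟨L, R, f, hself, ?_⟩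
    intro u v huv
    constructor
    · intro hadj
      have h1 : v ∈ N u := (hNmem u v).mpr (Or.inr hadj)
      have h2 : u ∈ N v := (hNmem v u).mpr (Or.inr hadj.symm)
      exact ⟨Finset.inf'_le f h1, Finset.le_sup' f h1, Finset.inf'_le f h2, Finset.le_sup' f h2⟩
    · rintro ⟨h1, h2, h3, h4'⟩
      rcases lt_or_gt_of_ne (fun h : f u = f v => huv (hinj h)) with h | h
      · exact key u v h h2 h3
      · exact (key v u h h4' h1).symm
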